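/- Let 𝔰 be a finite-dimensional semisimple complex Lie algebra and V a finite-dimensional 𝔰-module whose zero weight space V_0 (with respect to a Cartan subalgebra) is zero. Then for every n ≥ 1 the map D^n : S^n(𝔰) ⊗ V → S^{n-1}(𝔰) ⊗ V given by D^n(X_1⋯X_n ⊗ v) = Σ_i X_1⋯X̂_i⋯X_n ⊗ X_i·v is surjective. -/

import Mathlib

/- STATEMENT 1: For 𝔰 a finite-dimensional semisimple complex Lie algebra and V a
finite-dimensional 𝔰-module whose zero weight space (w.r.t. a Cartan subalgebra H) vanishes,
every map Dⁿ : Sⁿ(𝔰) ⊗ V → Sⁿ⁻¹(𝔰) ⊗ V (n = m+1 ≥ 1), defined on generators by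
X₁⋯Xₙ ⊗ v ↦ Σᵢ X₁⋯X̂ᵢ⋯Xₙ ⊗ Xᵢ·v, is surjective. -/

open TensorProduct

noncomputable def symRel (n : ℕ) (M : Type) [AddCommGroup M] [Module ℂ M] :
    Submodule ℂ (⨂[ℂ]^n M) :=
  Submodule.span ℂ {x | ∃ (f : Fin n → M) (i j : Fin n),
    x = PiTensorProduct.tprod ℂ f - PiTensorProduct.tprod ℂ (f ∘ Equiv.swap i j)}

abbrev SymPow (n : ℕ) (M : Type) [AddCommGroup M] [Module ℂ M] :=
  (⨂[ℂ]^n M) ⧸ symRel n M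

noncomputable def symProd (n : ℕ) (M : Type) [AddCommGroup M] [Module ℂ M] (f : Fin n → M) :
    SymPow n M := (symRel n M).mkQ (PiTensorProduct.tprod ℂ f)

/-- The weight space of a Lie algebra module (simultaneous eigenspace). -/
noncomputable def wtSpace (𝔥 V : Type) [LieRing 𝔥] [LieAlgebra ℂ 𝔥] [AddCommGroup V]
    [Module ℂ V] [LieRingModule 𝔥 V] [LieModule ℂ 𝔥 V] (μ : Module.Dual ℂ 𝔥) :
    Submodule ℂ V :=
  ⨅ H : 𝔥, Module.End.eigenspace (LieModule.toEnd ℂ 𝔥 V H) (μ H)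

section Aux

open MvPolynomial

variable {M : Type} [AddCommGroup M] [Module ℂ M]

lemma symProd_swap (n : ℕ) (f : Fin n → M) (i j : Fin n) :
    symProd n M (f ∘ Equiv.swap i j) = symProd n M f := by
  rw [symProd, symProd, eq_comm, Submodule.mkQ_apply, Submodule.mkQ_apply,
    Submodule.Quotient.eq]
  exact Submodule.subset_span ⟨f, i, j, rfl⟩

lemma symProd_perm (n : ℕ) (σ : Equiv.Perm (Fin n)) :
    ∀ f : Fin n → M, symProd n M (f ∘ σ) = symProd n M f := by
  refine Equiv.Perm.swap_induction_on σ (fun f => by simp) ?_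
  intro π i j hij ih f
  have h : f ∘ ⇑(Equiv.swap i j * π) = (f ∘ Equiv.swap i j) ∘ π := rfl
  rw [h, ih, symProd_swap]

lemma tprod_expand {d n : ℕ} (b : Fin d → M) (g : Fin n → Fin d → ℂ) :
    PiTensorProduct.tprod ℂ (fun j => ∑ i, g j i • b i) =
      ∑ k : Fin n → Fin d, (∏ j, g j (k j)) • PiTensorProduct.tprod ℂ (b ∘ k) := by
  rw [MultilinearMap.map_sum]
  refine Finset.sum_congr rfl fun k _ => ?_
  rw [MultilinearMap.map_smul_univ]
  rfl

lemma symProd_expand {d n : ℕ} (b : Fin d → M) (g : Fin n → Fin d → ℂ) :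
    symProd n M (fun j => ∑ i, g j i • b i) =
      ∑ k : Fin n → Fin d, (∏ j, g j (k j)) • symProd n M (b ∘ k) := by
  rw [symProd, tprod_expand, map_sum]
  simp [symProd]

lemma tensorPower_ext {d n : ℕ} (b : Module.Basis (Fin d) ℂ M)
    (L : (⨂[ℂ]^n M) →ₗ[ℂ] ℂ) (h : ∀ k : Fin n → Fin d, L (PiTensorProduct.tprod ℂ (b ∘ k)) = 0) :
    L = 0 := by
  rw [← LinearMap.ker_eq_top, ← top_le_iff, ← PiTensorProduct.span_tprod_eq_top,
    Submodule.span_le]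
  rintro x ⟨f, rfl⟩
  have hf : (PiTensorProduct.tprod ℂ f : ⨂[ℂ]^n M) =
      PiTensorProduct.tprod ℂ (fun j => ∑ i, b.repr (f j) i • b i) := by
    congr 1; funext j; rw [Module.Basis.sum_repr]
  simp only [SetLike.mem_coe, LinearMap.mem_ker, hf, tprod_expand, map_sum, map_smul, h,
    smul_zero, Finset.sum_const_zero]

noncomputable def polyOf {d n : ℕ} (A : (Fin n → Fin d) → ℂ) : MvPolynomial (Fin d) ℂ :=
  ∑ k : Fin n → Fin d, A k • ∏ j, MvPolynomial.X (k j)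

lemma eval_polyOf {d n : ℕ} (A : (Fin n → Fin d) → ℂ) (c : Fin d → ℂ) :
    MvPolynomial.eval c (polyOf A) = ∑ k : Fin n → Fin d, A k * ∏ j, c (k j) := by
  simp [polyOf, smul_eval]

lemma prod_X_eq_monomial {d : ℕ} {ι : Type*} (s : Finset ι) (k : ι → Fin d) :
    (∏ j ∈ s, (MvPolynomial.X (k j) : MvPolynomial (Fin d) ℂ)) =
      MvPolynomial.monomial (∑ j ∈ s, Finsupp.single (k j) 1) 1 := by
  classical
  induction s using Finset.induction with
  | empty => simp [monomial_zero']
  | insert _ _ h ih =>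
      rw [Finset.prod_insert h, ih, Finset.sum_insert h, MvPolynomial.X, monomial_mul, one_mul]

lemma coeff_polyOf {d n : ℕ} (A : (Fin n → Fin d) → ℂ) (μ : Fin d →₀ ℕ) :
    MvPolynomial.coeff μ (polyOf A) =
      ∑ k : Fin n → Fin d, if (∑ j, Finsupp.single (k j) 1) = μ then A k else 0 := by
  classical
  rw [polyOf, MvPolynomial.coeff_sum]
  refine Finset.sum_congr rfl fun k _ => ?_
  rw [prod_X_eq_monomial Finset.univ, MvPolynomial.coeff_smul, coeff_monomial]
  simp [smul_ite]

lemma fiber_card {d n : ℕ} (k : Fin n → Fin d) (i : Fin d) :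
    (∑ j, Finsupp.single (k j) (1 : ℕ)) i = Fintype.card {j // k j = i} := by
  classical
  rw [Finsupp.finset_sum_apply, Fintype.card_subtype, Finset.card_filter]
  refine Finset.sum_congr rfl fun j _ => ?_
  rw [Finsupp.single_apply]

lemma exists_perm_of_sum_single_eq {d n : ℕ} {k k' : Fin n → Fin d}
    (h : (∑ j, Finsupp.single (k j) (1 : ℕ)) = ∑ j, Finsupp.single (k' j) 1) :
    ∃ σ : Equiv.Perm (Fin n), k = k' ∘ σ := by
  classical
  have hcard : ∀ i, Fintype.card {j // k j = i} = Fintype.card {j // k' j = i} := by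
    intro i
    rw [← fiber_card, ← fiber_card, h]
  refine ⟨Equiv.ofFiberEquiv (f := k) (g := k') fun i => Fintype.equivOfCardEq (hcard i), ?_⟩
  funext j
  exact (Equiv.ofFiberEquiv_map (fun i => Fintype.equivOfCardEq (hcard i)) j).symm

lemma polyOf_eq_zero_apply {d n : ℕ} {A : (Fin n → Fin d) → ℂ}
    (h0 : polyOf A = 0)
    (hsym : ∀ (k k' : Fin n → Fin d) (σ : Equiv.Perm (Fin n)), k = k' ∘ σ → A k = A k')
    (k₀ : Fin n → Fin d) : A k₀ = 0 := by
  classical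
  have h1 : MvPolynomial.coeff (∑ j, Finsupp.single (k₀ j) 1) (polyOf A) = 0 := by
    rw [h0]; simp
  rw [coeff_polyOf] at h1
  have h2 : ∀ k : Fin n → Fin d,
      (if (∑ j, Finsupp.single (k j) 1) = (∑ j, Finsupp.single (k₀ j) 1) then A k else 0) =
      (if (∑ j, Finsupp.single (k j) 1) = (∑ j, Finsupp.single (k₀ j) 1) then A k₀ else 0) := by
    intro k
    by_cases hk : (∑ j, Finsupp.single (k j) 1) = (∑ j, Finsupp.single (k₀ j) (1 : ℕ))
    · obtain ⟨σ, hσ⟩ := exists_perm_of_sum_single_eq hk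
      simp [hk, hsym k k₀ σ hσ]
    · simp [hk]
  rw [Finset.sum_congr rfl fun k _ => h2 k, ← Finset.sum_filter, Finset.sum_const] at h1
  have hk₀ : k₀ ∈ Finset.univ.filter
      (fun k : Fin n → Fin d =>
        (∑ j, Finsupp.single (k j) 1) = (∑ j, Finsupp.single (k₀ j) (1 : ℕ))) := by
    simp
  rcases smul_eq_zero.mp h1 with h | h
  · exact absurd (Finset.card_eq_zero.mp (by exact_mod_cast h)) (Finset.ne_empty_of_mem hk₀)
  · exact h

lemma exists_forall_ne_zero {W : Type*} [AddCommGroup W] [Module ℂ W] [FiniteDimensional ℂ W]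
    {ι : Type*} [Fintype ι] (χ : ι → (W →ₗ[ℂ] ℂ)) (hχ : ∀ i, χ i ≠ 0) :
    ∃ x : W, ∀ i, χ i x ≠ 0 := by
  classical
  set e := Module.finrank ℂ W
  set b : Module.Basis (Fin e) ℂ W := Module.finBasis ℂ W
  set P : ι → MvPolynomial (Fin e) ℂ := fun i => ∑ k, χ i (b k) • MvPolynomial.X k with hP
  have heval : ∀ i c, MvPolynomial.eval c (P i) = χ i (∑ k, c k • b k) := by
    intro i c
    simp [hP, smul_eval, map_sum, mul_comm]
  have hPne : ∀ i, P i ≠ 0 := by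
    intro i hPi
    apply hχ i
    ext y
    have := heval i (b.equivFun y)
    rw [hPi, map_zero] at this
    rw [b.sum_equivFun y] at this
    simpa using this.symm
  have hprod : (∏ i, P i) ≠ 0 := Finset.prod_ne_zero_iff.mpr fun i _ => hPne i
  have hne : ¬ ∀ c : Fin e → ℂ, MvPolynomial.eval c (∏ i, P i) = 0 := by
    intro hc
    exact hprod (MvPolynomial.funext fun c => by rw [hc c, map_zero])
  push_neg at hne
  obtain ⟨c, hc⟩ := hne
  rw [map_prod] at hc
  refine ⟨∑ k, c k • b k, fun i => ?_⟩
  rw [← heval i c]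
  exact Finset.prod_ne_zero_iff.mp hc i (Finset.mem_univ i)

variable (𝔰 : Type) [LieRing 𝔰] [LieAlgebra ℂ 𝔰] [FiniteDimensional ℂ 𝔰]
    (V : Type) [AddCommGroup V] [Module ℂ V] [LieRingModule 𝔰 V] [LieModule ℂ 𝔰 V]
    [FiniteDimensional ℂ V]

noncomputable def detPoly : MvPolynomial (Fin (Module.finrank ℂ 𝔰)) ℂ :=
  letI b := Module.finBasis ℂ 𝔰
  letI bV := Module.finBasis ℂ V
  Matrix.det (Matrix.of fun i j =>
    ∑ k, (LinearMap.toMatrix bV bV (LieModule.toEnd ℂ 𝔰 V (b k))) i j • MvPolynomial.X k)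

lemma eval_detPoly (c : Fin (Module.finrank ℂ 𝔰) → ℂ) :
    MvPolynomial.eval c (detPoly 𝔰 V) =
      LinearMap.det (LieModule.toEnd ℂ 𝔰 V (∑ k, c k • Module.finBasis ℂ 𝔰 k)) := by
  set b := Module.finBasis ℂ 𝔰
  set bV := Module.finBasis ℂ V
  rw [detPoly, RingHom.map_det]
  rw [← LinearMap.det_toMatrix bV]
  congr 1
  ext i j
  have hEnd : LieModule.toEnd ℂ 𝔰 V (∑ k, c k • b k)
      = ∑ k, c k • LieModule.toEnd ℂ 𝔰 V (b k) := by
    rw [map_sum]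
    exact Finset.sum_congr rfl fun k _ => by rw [map_smul]
  rw [hEnd, map_sum]
  simp [smul_eval, mul_comm, Matrix.sum_apply, Matrix.smul_apply, smul_eq_mul]
  rfl

open LieModule in
lemma exists_surj_toEnd (H : LieSubalgebra ℂ 𝔰) [H.IsCartanSubalgebra]
    (hV0 : wtSpace H V (0 : Module.Dual ℂ H) = ⊥) :
    ∃ X : 𝔰, Function.Surjective (LieModule.toEnd ℂ 𝔰 V X) := by
  classical
  have fdH : FiniteDimensional ℂ H := inferInstance
  have hwt : ∀ χ : Weight ℂ H V, (χ : H →ₗ[ℂ] ℂ) ≠ 0 := by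
    intro χ hχ0
    obtain ⟨v, hv, hvx⟩ := exists_forall_lie_eq_smul ℂ H V χ
    apply hv
    have hmem : v ∈ wtSpace H V (0 : Module.Dual ℂ H) := by
      simp only [wtSpace, Submodule.mem_iInf]
      intro x
      rw [Module.End.mem_eigenspace_iff]
      have hx0 : χ x = 0 := by
        have := LinearMap.congr_fun hχ0 x
        simpa using this
      simp [LieModule.toEnd_apply_apply, hvx x, hx0]
    rw [hV0] at hmem
    simpa using hmem
  obtain ⟨x, hx⟩ := exists_forall_ne_zero (fun χ : Weight ℂ H V => (χ : H →ₗ[ℂ] ℂ)) hwt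
  have hx' : ∀ χ : Weight ℂ H V, χ x ≠ 0 := fun χ => hx χ
  refine ⟨(x : 𝔰), ?_⟩
  rw [← LinearMap.range_eq_top, eq_top_iff]
  have key : ∀ χ : Weight ℂ H V,
      (genWeightSpace V (χ : H → ℂ)).toSubmodule ≤
        LinearMap.range (LieModule.toEnd ℂ 𝔰 V (x : 𝔰)) := by
    intro χ v hv
    have hnil := LieModule.isNilpotent_toEnd_sub_algebraMap V (χ : H → ℂ) x
    have hunit : IsUnit (LieModule.toEnd ℂ H (genWeightSpace V (χ : H → ℂ)) x) := by
      have h1 : IsUnit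
          (algebraMap ℂ (Module.End ℂ (genWeightSpace V (χ : H → ℂ))) (χ x)) :=
        (isUnit_iff_ne_zero.mpr (hx' χ)).map (algebraMap ℂ _)
      have h2 := hnil.isUnit_add_left_of_commute h1
        (Algebra.commute_algebraMap_right _ _)
      simpa using h2
    obtain ⟨u, hu⟩ := (Module.End.isUnit_iff _).mp hunit |>.2 ⟨v, hv⟩
    refine ⟨(u : V), ?_⟩
    have hcoe : ((LieModule.toEnd ℂ H (genWeightSpace V (χ : H → ℂ)) x) u : V) = v := by
      rw [hu]
    rw [← hcoe]
    simp only [LieModule.toEnd_apply_apply]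
    rw [LieSubmodule.coe_bracket, LieSubalgebra.coe_bracket_of_module]
  have htop := LieModule.iSup_genWeightSpace_eq_top' ℂ H V
  intro v _
  have hv : v ∈ (⨆ χ : Weight ℂ H V, genWeightSpace V (χ : H → ℂ)).toSubmodule := by
    rw [htop]; trivial
  rw [LieSubmodule.iSup_toSubmodule] at hv
  exact (iSup_le key) hv

end Aux

theorem statement1 (𝔰 : Type) [LieRing 𝔰] [LieAlgebra ℂ 𝔰] [FiniteDimensional ℂ 𝔰]
    [LieAlgebra.IsSemisimple ℂ 𝔰]
    (H : LieSubalgebra ℂ 𝔰) [H.IsCartanSubalgebra]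
    (V : Type) [AddCommGroup V] [Module ℂ V] [LieRingModule 𝔰 V] [LieModule ℂ 𝔰 V]
    [FiniteDimensional ℂ V]
    (hV0 : wtSpace H V (0 : Module.Dual ℂ H) = ⊥)
    (m : ℕ)
    (D : (SymPow (m + 1) 𝔰 ⊗[ℂ] V) →ₗ[ℂ] SymPow m 𝔰 ⊗[ℂ] V)
    (hD : ∀ (f : Fin (m + 1) → 𝔰) (v : V),
      D (symProd (m + 1) 𝔰 f ⊗ₜ[ℂ] v) =
        ∑ i : Fin (m + 1), symProd m 𝔰 (f ∘ i.succAbove) ⊗ₜ[ℂ] ⁅f i, v⁆) :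
    Function.Surjective D := by
  classical
  rw [← LinearMap.range_eq_top, eq_top_iff]
  intro y _
  rw [← Subspace.forall_mem_dualAnnihilator_apply_eq_zero_iff (LinearMap.range D) y]
  intro φ hφ
  suffices hφ0 : φ = 0 by rw [hφ0]; rfl
  rw [Submodule.mem_dualAnnihilator] at hφ
  -- Step A : φ kills Xᵐ ⊗ X·v for every X
  have hstep : ∀ (X : 𝔰) (v : V), φ (symProd m 𝔰 (fun _ => X) ⊗ₜ[ℂ] ⁅X, v⁆) = 0 := by
    intro X v
    have h1 := hφ _ ⟨symProd (m + 1) 𝔰 (fun _ => X) ⊗ₜ[ℂ] v, rfl⟩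
    rw [hD] at h1
    have h2 : ∀ i : Fin (m + 1),
        (fun _ : Fin (m + 1) => X) ∘ i.succAbove = fun _ : Fin m => X := fun i => rfl
    simp only [h2] at h1
    rw [Finset.sum_const, Finset.card_univ, Fintype.card_fin, map_nsmul, nsmul_eq_mul] at h1
    rcases mul_eq_zero.mp h1 with h | h
    · exact absurd h (by exact_mod_cast Nat.succ_ne_zero m)
    · exact h
  obtain ⟨X₀, hX₀⟩ := exists_surj_toEnd 𝔰 V H hV0
  set d := Module.finrank ℂ 𝔰 with hd
  set bS : Module.Basis (Fin d) ℂ 𝔰 := Module.finBasis ℂ 𝔰 with hbS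
  set A : V → (Fin m → Fin d) → ℂ := fun w k => φ (symProd m 𝔰 (bS ∘ k) ⊗ₜ[ℂ] w) with hA
  have hPeval : ∀ (w : V) (c : Fin d → ℂ),
      MvPolynomial.eval c (polyOf (A w)) =
        φ (symProd m 𝔰 (fun _ => ∑ i, c i • bS i) ⊗ₜ[ℂ] w) := by
    intro w c
    rw [eval_polyOf]
    have hexp : symProd m 𝔰 (fun _ : Fin m => ∑ i, c i • bS i) =
        ∑ k : Fin m → Fin d, (∏ j, c (k j)) • symProd m 𝔰 (bS ∘ k) :=
      symProd_expand bS fun _ => c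
    rw [hexp, TensorProduct.sum_tmul, map_sum]
    refine Finset.sum_congr rfl fun k _ => ?_
    rw [← TensorProduct.smul_tmul', map_smul, smul_eq_mul, mul_comm]
  have hdet : ∀ c : Fin d → ℂ, MvPolynomial.eval c (detPoly 𝔰 V) ≠ 0 →
      Function.Surjective (LieModule.toEnd ℂ 𝔰 V (∑ k, c k • bS k)) := by
    intro c hcne
    rw [eval_detPoly] at hcne
    intro yy
    exact ⟨(LinearMap.equivOfDetNeZero _ hcne).symm yy,
      (LinearMap.equivOfDetNeZero _ hcne).apply_symm_apply yy⟩
  have hQne : detPoly 𝔰 V ≠ 0 := by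
    intro h
    have h1 := eval_detPoly 𝔰 V (bS.equivFun X₀)
    rw [h, map_zero, bS.sum_equivFun X₀] at h1
    have hbij : Function.Bijective (LieModule.toEnd ℂ 𝔰 V X₀) :=
      ⟨LinearMap.injective_iff_surjective.mpr hX₀, hX₀⟩
    have hu : IsUnit (LieModule.toEnd ℂ 𝔰 V X₀) := (Module.End.isUnit_iff _).mpr hbij
    have hdu := LinearMap.isUnit_det _ hu
    rw [← h1] at hdu
    exact (by norm_num : ¬ IsUnit (0 : ℂ)) hdu
  have hPzero : ∀ w : V, polyOf (A w) = 0 := by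
    intro w
    have hprod : polyOf (A w) * detPoly 𝔰 V = 0 := by
      apply MvPolynomial.funext
      intro c
      rw [map_mul, map_zero]
      by_cases hc : MvPolynomial.eval c (detPoly 𝔰 V) = 0
      · rw [hc, mul_zero]
      · obtain ⟨v, hvw⟩ := hdet c hc w
        have h3 : φ (symProd m 𝔰 (fun _ => ∑ k, c k • bS k) ⊗ₜ[ℂ] w) = 0 := by
          rw [← hvw]
          simpa [LieModule.toEnd_apply_apply, sum_lie, smul_lie] using hstep (∑ k, c k • bS k) v
        rw [hPeval w c, h3, zero_mul]
    rcases mul_eq_zero.mp hprod with h | h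
    · exact h
    · exact absurd h hQne
  have hA0 : ∀ (w : V) (k₀ : Fin m → Fin d), A w k₀ = 0 := by
    intro w k₀
    refine polyOf_eq_zero_apply (hPzero w) ?_ k₀
    intro k k' σ hσ
    simp only [hA]
    rw [hσ]
    have h5 : bS ∘ (k' ∘ σ) = (bS ∘ k') ∘ σ := rfl
    rw [h5, symProd_perm]
  apply TensorProduct.ext'
  intro xx w
  have hLw : (φ ∘ₗ ((TensorProduct.mk ℂ (SymPow m 𝔰) V).flip w)) ∘ₗ (symRel m 𝔰).mkQ = 0 := by
    apply tensorPower_ext bS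
    intro k
    simpa [symProd, hA] using hA0 w k
  have hLw' : (φ ∘ₗ ((TensorProduct.mk ℂ (SymPow m 𝔰) V).flip w)) = 0 :=
    (LinearMap.cancel_right (Submodule.mkQ_surjective _)).mp
      (hLw.trans (LinearMap.zero_comp _).symm)
  have := LinearMap.congr_fun hLw' xx
  simpa using this
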